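/- Let φ : ℝ⁵ → ℝ be C³ and assume that the function L₁(Ā₁) − L̄₁(A₁) vanishes nowhere on ℝ⁵. Set k := −( L₂(Ā₁) − L̄₁(A₂) ) / ( L₁(Ā₁) − L̄₁(A₁) ), and define the operators K f := k·(L₁ f) + L₂ f and K̄ f := conj(k)·(L̄₁ f) + L̄₂ f. If there exist functions g₁, g₂ : ℝ⁵ → ℂ such that [K, K̄] f = g₁·(K f) + g₂·(K̄ f) for every smooth f : ℝ⁵ → ℂ, then K(conj k) = 0 and K̄(k) = 0 identically on ℝ⁵, and [K, K̄] f = 0 for every smooth f. (This is the paper's derivation that the Levi-kernel fields of a General Class IV₂ manifold satisfy [K, K̄] = 0, 0 ≡ K(k̄), 0 ≡ K̄(k).) -/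
import Mathlib


noncomputable section
open Complex ComplexConjugate

/-- Points of `ℝ⁵`, with coordinates `(x₁, y₁, x₂, y₂, u)`, `z₁ = x₁ + i y₁`,
`z₂ = x₂ + i y₂`. -/
abbrev V5 := Fin 5 → ℝ

/-- Partial derivative in the `j`-th coordinate direction. -/
def pd (j : Fin 5) (f : V5 → ℂ) : V5 → ℂ := fun p => fderiv ℝ f p (Pi.single j 1)

/-- Wirtinger derivative `f_{z₁} := (f_{x₁} − i f_{y₁})/2`. -/
def wz1 (f : V5 → ℂ) : V5 → ℂ := fun p => (pd 0 f p - I * pd 1 f p) / 2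

/-- Wirtinger derivative `f_{z̄₁} := (f_{x₁} + i f_{y₁})/2`. -/
def wzb1 (f : V5 → ℂ) : V5 → ℂ := fun p => (pd 0 f p + I * pd 1 f p) / 2

/-- Wirtinger derivative `f_{z₂} := (f_{x₂} − i f_{y₂})/2`. -/
def wz2 (f : V5 → ℂ) : V5 → ℂ := fun p => (pd 2 f p - I * pd 3 f p) / 2

/-- Wirtinger derivative `f_{z̄₂} := (f_{x₂} + i f_{y₂})/2`. -/
def wzb2 (f : V5 → ℂ) : V5 → ℂ := fun p => (pd 2 f p + I * pd 3 f p) / 2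

/-- Partial derivative `f_u`. -/
def du (f : V5 → ℂ) : V5 → ℂ := pd 4 f

/-- Complexification of a real-valued function. -/
def cl (φ : V5 → ℝ) : V5 → ℂ := fun p => (φ p : ℂ)

variable (φ : V5 → ℝ)

/-- The coefficient `A₁ := −φ_{z₁}/(i + φ_u)`. -/
def A1 : V5 → ℂ := fun p => -(wz1 (cl φ) p) / (I + du (cl φ) p)

/-- The coefficient `A₂ := −φ_{z₂}/(i + φ_u)`. -/
def A2 : V5 → ℂ := fun p => -(wz2 (cl φ) p) / (I + du (cl φ) p)

/-- The operator `L₁ f := f_{z₁} + A₁ f_u`. -/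
def L1 (f : V5 → ℂ) : V5 → ℂ := fun p => wz1 f p + A1 φ p * du f p

/-- The operator `L₂ f := f_{z₂} + A₂ f_u`. -/
def L2 (f : V5 → ℂ) : V5 → ℂ := fun p => wz2 f p + A2 φ p * du f p

/-- The conjugate operator `L̄₁ f := f_{z̄₁} + Ā₁ f_u`. -/
def Lb1 (f : V5 → ℂ) : V5 → ℂ := fun p => wzb1 f p + conj (A1 φ p) * du f p

/-- The conjugate operator `L̄₂ f := f_{z̄₂} + Ā₂ f_u`. -/
def Lb2 (f : V5 → ℂ) : V5 → ℂ := fun p => wzb2 f p + conj (A2 φ p) * du f p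

/-- The fundamental function `k := −( L₂(Ā₁) − L̄₁(A₂) ) / ( L₁(Ā₁) − L̄₁(A₁) )`. -/
def kf : V5 → ℂ := fun p =>
  -(L2 φ (fun q => conj (A1 φ q)) p - Lb1 φ (A2 φ) p)
    / (L1 φ (fun q => conj (A1 φ q)) p - Lb1 φ (A1 φ) p)

/-- The Levi-kernel field `K f := k·(L₁ f) + L₂ f`. -/
def Kof (f : V5 → ℂ) : V5 → ℂ := fun p => kf φ p * L1 φ f p + L2 φ f p

/-- The conjugate Levi-kernel field `K̄ f := k̄·(L̄₁ f) + L̄₂ f`. -/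
def Kbof (f : V5 → ℂ) : V5 → ℂ := fun p => conj (kf φ p) * Lb1 φ f p + Lb2 φ f p


/-- Test function `q ↦ q m + b · q n` (complex coordinates). -/
def tf (m n : Fin 5) (b : ℂ) : V5 → ℂ := fun q => ((q m : ℝ) : ℂ) + b * ((q n : ℝ) : ℂ)

lemma pd_tf (m n j : Fin 5) (b : ℂ) (p : V5) :
    pd j (tf m n b) p
      = (if m = j then 1 else 0) + b * (if n = j then 1 else 0) := by
  have h : HasFDerivAt (tf m n b)
      ((Complex.ofRealCLM.comp (ContinuousLinearMap.proj m))
        + b • (Complex.ofRealCLM.comp (ContinuousLinearMap.proj n))) p := by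
    have hm0 : HasFDerivAt (⇑(Complex.ofRealCLM.comp
          (ContinuousLinearMap.proj m : V5 →L[ℝ] ℝ)))
        (Complex.ofRealCLM.comp (ContinuousLinearMap.proj m)) p :=
      ContinuousLinearMap.hasFDerivAt _
    have hn0 : HasFDerivAt (⇑(Complex.ofRealCLM.comp
          (ContinuousLinearMap.proj n : V5 →L[ℝ] ℝ)))
        (Complex.ofRealCLM.comp (ContinuousLinearMap.proj n)) p :=
      ContinuousLinearMap.hasFDerivAt _
    have hm : HasFDerivAt (fun q : V5 => ((q m : ℝ) : ℂ))
        (Complex.ofRealCLM.comp (ContinuousLinearMap.proj m)) p := hm0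
    have hn : HasFDerivAt (fun q : V5 => ((q n : ℝ) : ℂ))
        (Complex.ofRealCLM.comp (ContinuousLinearMap.proj n)) p := hn0
    exact hm.add (hn.const_smul b)
  have hf : fderiv ℝ (tf m n b) p = _ := h.fderiv
  simp only [pd, hf]
  simp only [ContinuousLinearMap.add_apply, ContinuousLinearMap.smul_apply,
    ContinuousLinearMap.comp_apply, ContinuousLinearMap.proj_apply,
    Complex.ofRealCLM_apply, smul_eq_mul, Pi.single_apply]
  split_ifs <;> simp

lemma contDiff_tf (m n : Fin 5) (b : ℂ) : ContDiff ℝ (⊤ : ℕ∞) (tf m n b) := by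
  have hm : ContDiff ℝ (⊤ : ℕ∞) (fun q : V5 => ((q m : ℝ) : ℂ)) :=
    Complex.ofRealCLM.contDiff.comp (ContinuousLinearMap.proj m : V5 →L[ℝ] ℝ).contDiff
  have hn : ContDiff ℝ (⊤ : ℕ∞) (fun q : V5 => ((q n : ℝ) : ℂ)) :=
    Complex.ofRealCLM.contDiff.comp (ContinuousLinearMap.proj n : V5 →L[ℝ] ℝ).contDiff
  exact hm.add (contDiff_const.mul hn)

lemma pd_const (c : ℂ) (j : Fin 5) (p : V5) : pd j (fun _ => c) p = 0 := by
  simp [pd]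

lemma Kof_const (c : ℂ) (p : V5) : Kof φ (fun _ => c) p = 0 := by
  simp [Kof, L1, L2, wz1, wz2, du, pd_const]

lemma Kbof_const (c : ℂ) (p : V5) : Kbof φ (fun _ => c) p = 0 := by
  simp [Kbof, Lb1, Lb2, wzb1, wzb2, du, pd_const]

/-- The paper's derivation that the Levi-kernel fields of a General Class IV₂ manifold
satisfy `[K, K̄] = 0`, `0 ≡ K(k̄)`, `0 ≡ K̄(k)`: if `[K, K̄] = g₁·K + g₂·K̄` for some
functions `g₁, g₂`, then `K(k̄) = 0`, `K̄(k) = 0` and `[K, K̄] = 0`. -/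
theorem class_IV₂_kernel_bracket_vanishes (hφ : ContDiff ℝ 3 φ)
    (h0 : ∀ p, L1 φ (fun q => conj (A1 φ q)) p - Lb1 φ (A1 φ) p ≠ 0)
    (hbr : ∃ g₁ g₂ : V5 → ℂ, ∀ f : V5 → ℂ, ContDiff ℝ (⊤ : ℕ∞) f → ∀ p,
        Kof φ (Kbof φ f) p - Kbof φ (Kof φ f) p = g₁ p * Kof φ f p + g₂ p * Kbof φ f p) :
    (∀ p, Kof φ (fun q => conj (kf φ q)) p = 0) ∧
    (∀ p, Kbof φ (kf φ) p = 0) ∧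
    (∀ f : V5 → ℂ, ContDiff ℝ (⊤ : ℕ∞) f → ∀ p,
        Kof φ (Kbof φ f) p - Kbof φ (Kof φ f) p = 0) := by
  classical
  obtain ⟨g₁, g₂, hg⟩ := hbr
  have hK_z1 : Kof φ (tf 0 1 I) = fun p => kf φ p := by
    funext p
    simp only [Kof, L1, L2, wz1, wz2, du, pd_tf]
    simp
  have hKb_z1 : Kbof φ (tf 0 1 I) = fun _ => (0 : ℂ) := by
    funext p
    simp only [Kbof, Lb1, Lb2, wzb1, wzb2, du, pd_tf]
    simp
  have hK_zb1 : Kof φ (tf 0 1 (-I)) = fun _ => (0 : ℂ) := by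
    funext p
    simp only [Kof, L1, L2, wz1, wz2, du, pd_tf]
    simp
  have hKb_zb1 : Kbof φ (tf 0 1 (-I)) = fun p => conj (kf φ p) := by
    funext p
    simp only [Kbof, Lb1, Lb2, wzb1, wzb2, du, pd_tf]
    simp
  have hK_z2 : Kof φ (tf 2 3 I) = fun _ => (1 : ℂ) := by
    funext p
    simp only [Kof, L1, L2, wz1, wz2, du, pd_tf]
    simp
  have hKb_z2 : Kbof φ (tf 2 3 I) = fun _ => (0 : ℂ) := by
    funext p
    simp only [Kbof, Lb1, Lb2, wzb1, wzb2, du, pd_tf]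
    simp
  have hK_zb2 : Kof φ (tf 2 3 (-I)) = fun _ => (0 : ℂ) := by
    funext p
    simp only [Kof, L1, L2, wz1, wz2, du, pd_tf]
    simp
  have hKb_zb2 : Kbof φ (tf 2 3 (-I)) = fun _ => (1 : ℂ) := by
    funext p
    simp only [Kbof, Lb1, Lb2, wzb1, wzb2, du, pd_tf]
    simp
  have hg1 : ∀ p, g₁ p = 0 := by
    intro p
    have h := hg (tf 2 3 I) (contDiff_tf 2 3 I) p
    rw [hK_z2, hKb_z2] at h
    simpa [Kof_const, Kbof_const] using h.symm
  have hg2 : ∀ p, g₂ p = 0 := by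
    intro p
    have h := hg (tf 2 3 (-I)) (contDiff_tf 2 3 (-I)) p
    rw [hK_zb2, hKb_zb2] at h
    simpa [Kof_const, Kbof_const] using h.symm
  have hKconjk : ∀ p, Kof φ (fun q => conj (kf φ q)) p = 0 := by
    intro p
    have h := hg (tf 0 1 (-I)) (contDiff_tf 0 1 (-I)) p
    rw [hK_zb1, hKb_zb1] at h
    simpa [Kof_const, Kbof_const, hg1 p, hg2 p] using h
  have hKbk : ∀ p, Kbof φ (kf φ) p = 0 := by
    intro p
    have h := hg (tf 0 1 I) (contDiff_tf 0 1 I) p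
    rw [hK_z1, hKb_z1] at h
    simp only [Kof_const, Kbof_const, hg1 p, hg2 p, zero_mul, mul_zero, add_zero,
      zero_sub, zero_add] at h
    simpa using h
  refine ⟨hKconjk, hKbk, ?_⟩
  intro f hf p
  rw [hg f hf p, hg1 p, hg2 p]
  ring
end
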